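/- Let B be a real symmetric N×N matrix that is conditionally negative semidefinite, i.e. λᵀ B λ ≤ 0 for all λ ∈ R^N with ∑ λ_j = 0. Let C = I - (1/N)𝟙 be the centering matrix (𝟙 the all-ones matrix). Then A := -C B C is positive semidefinite. -/

import Mathlib

open Matrix

/-- If `B` is a real symmetric `N×N` matrix that is conditionally negative semidefinite
(`λᵀ B λ ≤ 0` whenever `∑ λ j = 0`) and `C = I - (1/N) 𝟙` is the centering matrix, then
`A := -C B C` is positive semidefinite. -/
theorem neg_double_centering_posSemidef (N : ℕ) (hN : 1 ≤ N)
    (B : Matrix (Fin N) (Fin N) ℝ) (hsymm : B.IsSymm)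
    (hcnd : ∀ lam : Fin N → ℝ, ∑ j, lam j = 0 → lam ⬝ᵥ (B *ᵥ lam) ≤ 0) :
    letI C : Matrix (Fin N) (Fin N) ℝ :=
      1 - (N : ℝ)⁻¹ • Matrix.of (fun _ _ => (1 : ℝ))
    (-(C * B * C)).PosSemidef := by
  set C : Matrix (Fin N) (Fin N) ℝ := 1 - (N : ℝ)⁻¹ • Matrix.of (fun _ _ => (1 : ℝ)) with hC
  have hNne : (N : ℝ) ≠ 0 := by positivity
  have hCsymm : C.IsSymm := by
    unfold Matrix.IsSymm
    ext i j
    simp [C, Matrix.transpose_apply, Matrix.one_apply, eq_comm]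
  have hsum : ∀ x : Fin N → ℝ, ∑ j, (C *ᵥ x) j = 0 := by
    intro x
    have : ∀ j, (C *ᵥ x) j = x j - (N : ℝ)⁻¹ * ∑ k, x k := by
      intro j
      simp [C, Matrix.mulVec, dotProduct, Matrix.one_apply, sub_mul,
        Finset.sum_sub_distrib, Finset.mul_sum]
    simp only [this]
    rw [Finset.sum_sub_distrib, Finset.sum_const, Finset.card_univ, Fintype.card_fin,
      nsmul_eq_mul]
    field_simp
    simp
  refine Matrix.PosSemidef.of_dotProduct_mulVec_nonneg ?_ ?_
  · have : (C * B * C).IsHermitian := by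
      have : (C * B * C)ᵀ = C * B * C := by
        rw [Matrix.transpose_mul, Matrix.transpose_mul, hCsymm, hsymm, Matrix.mul_assoc]
      simpa [Matrix.IsHermitian, Matrix.conjTranspose_eq_transpose_of_trivial] using this
    simpa using this.neg
  · intro x
    have key : x ⬝ᵥ ((C * B * C) *ᵥ x) = (C *ᵥ x) ⬝ᵥ (B *ᵥ (C *ᵥ x)) := by
      rw [← Matrix.mulVec_mulVec, ← Matrix.mulVec_mulVec,
        Matrix.dotProduct_mulVec x C, ← hCsymm]
      rw [Matrix.vecMul_transpose, hCsymm]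
    have h := hcnd (C *ᵥ x) (hsum x)
    simp only [Matrix.neg_mulVec, dotProduct_neg, star_trivial]
    rw [key] at *
    simpa using neg_nonneg.mpr h
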